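/- Suppose l is an optimal dual solution with ℓ = ā + l̄, and F an optimal primal multiflow for the parametric problem with λ = p (the minimum ℓ-distance between distinct terminals). For any node v ∈ V(G) with l(v) > 0, the corresponding capacity-inheriting edge e_v of the auxiliary bidirected graph H is saturated by the bidirected flow generated by F: f(e_v) = c(e_v). -/

import Mathlib

open SimpleGraph

/-- A `T`-path: its endpoints are distinct terminals and all internal nodes
are non-terminals. -/
def IsTPath {V : Type} (G : SimpleGraph V) (T : Set V) {s t : V}
    (P : G.Walk s t) : Prop :=
  s ∈ T ∧ t ∈ T ∧ s ≠ t ∧ P.IsPath ∧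
    ∀ v ∈ P.support, v ≠ s → v ≠ t → v ∉ T

/-- The type of `T`-paths of `G`. -/
structure TPath {V : Type} (G : SimpleGraph V) (T : Set V) where
  s : V
  t : V
  walk : G.Walk s t
  prop : IsTPath G T walk

/-- The value of a multiflow: the total weight of all its paths. -/
noncomputable def mfVal {V : Type} {G : SimpleGraph V} {T : Set V}
    (F : TPath G T →₀ ℚ) : ℚ :=
  F.sum fun _ w => w

open Classical in
/-- The node load of a multiflow at `v`: total weight of the paths through `v`. -/
noncomputable def mfLoad {V : Type} {G : SimpleGraph V} {T : Set V}
    (F : TPath G T →₀ ℚ) (v : V) : ℚ :=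
  F.sum fun P w => if v ∈ P.walk.support then w else 0

/-- The cost of a multiflow with respect to node costs `a`. -/
noncomputable def mfCost {V : Type} {G : SimpleGraph V} {T : Set V}
    (a : V → ℚ) (F : TPath G T →₀ ℚ) : ℚ :=
  F.sum fun P w => w * (P.walk.support.map a).sum

/-- Feasibility: nonnegative weights whose load at each node is at most `c`. -/
def MFFeasible {V : Type} {G : SimpleGraph V} {T : Set V}
    (c : V → ℕ) (F : TPath G T →₀ ℚ) : Prop :=
  (∀ P, 0 ≤ F P) ∧ ∀ v, mfLoad F v ≤ (c v : ℚ)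



section Farkas
variable {n : Type} [Fintype n]

/-- dot product over ℚ. -/
def dotQ (x y : n → ℚ) : ℚ := ∑ v, x v * y v

lemma dotQ_smul_right (x y : n → ℚ) (t : ℚ) : dotQ x (t • y) = t * dotQ x y := by
  simp [dotQ, Finset.mul_sum, mul_left_comm]

lemma dotQ_sub_right (x y z : n → ℚ) : dotQ x (y - z) = dotQ x y - dotQ x z := by
  simp [dotQ, mul_sub, Finset.sum_sub_distrib]

lemma dotQ_sub_left (x y z : n → ℚ) : dotQ (x - y) z = dotQ x z - dotQ y z := by
  simp [dotQ, sub_mul, Finset.sum_sub_distrib]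

lemma dotQ_smul_left (x y : n → ℚ) (t : ℚ) : dotQ (t • x) y = t * dotQ x y := by
  simp [dotQ, Finset.mul_sum, mul_assoc]

lemma dotQ_self_nonneg (x : n → ℚ) : 0 ≤ dotQ x x :=
  Finset.sum_nonneg fun v _ => mul_self_nonneg _

lemma eq_zero_of_dotQ_self (x : n → ℚ) (h : dotQ x x ≤ 0) : x = 0 := by
  have h0 : dotQ x x = 0 := le_antisymm h (dotQ_self_nonneg x)
  funext v
  have := (Finset.sum_eq_zero_iff_of_nonneg (fun v _ => mul_self_nonneg (x v))).mp h0 v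
    (Finset.mem_univ v)
  simpa [mul_self_eq_zero] using this

/-- membership in the cone generated by a list of vectors. -/
def InConeQ : List (n → ℚ) → (n → ℚ) → Prop
  | [], c => c = 0
  | g :: L, c => ∃ (t : ℚ) (c' : n → ℚ), 0 ≤ t ∧ InConeQ L c' ∧ c = c' + t • g

lemma inConeQ_shift (g : n → ℚ) :
    ∀ (L : List (n → ℚ)) (β : (n → ℚ) → ℚ) (x : n → ℚ),
      (∀ gi ∈ L, 0 ≤ β gi) → InConeQ (L.map fun gi => gi + β gi • g) x →
      ∃ s : ℚ, 0 ≤ s ∧ InConeQ L (x - s • g) := by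
  intro L
  induction L with
  | nil =>
    intro β x _ hx
    exact ⟨0, le_rfl, by simpa [InConeQ] using hx⟩
  | cons gi L ih =>
    intro β x hβ hx
    obtain ⟨t, c', ht, hc', rfl⟩ := hx
    obtain ⟨s, hs, hs'⟩ := ih β c' (fun g hg => hβ g (List.mem_cons_of_mem _ hg)) hc'
    refine ⟨s + t * β gi,
      add_nonneg hs (mul_nonneg ht (hβ gi (List.mem_cons_self))), t, c' - s • g, ht, hs', ?_⟩
    funext v; simp [smul_eq_mul]; ring

lemma farkas_len : ∀ (N : ℕ) (L : List (n → ℚ)), L.length = N → ∀ c : n → ℚ,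
    (∀ d : n → ℚ, (∀ g ∈ L, 0 ≤ dotQ g d) → 0 ≤ dotQ c d) → InConeQ L c := by
  intro N
  induction N with
  | zero =>
    intro L hL c h
    rw [List.length_eq_zero_iff] at hL
    subst hL
    have h1 : 0 ≤ dotQ c (-c) := h (-c) (by simp)
    have h2 : dotQ c (-c) = - dotQ c c := by
      simp [dotQ, Finset.sum_neg_distrib]
    exact eq_zero_of_dotQ_self c (by linarith [h1, h2.symm ▸ h1])
  | succ N ih =>
    intro L hL c h
    match L, hL with
    | g :: L, hL =>
      have hLen : L.length = N := by simpa using hL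
      by_cases hc : ∀ d : n → ℚ, (∀ gi ∈ L, 0 ≤ dotQ gi d) → 0 ≤ dotQ c d
      · have := ih L hLen c hc
        exact ⟨0, c, le_rfl, this, by funext v; simp⟩
      · push_neg at hc
        obtain ⟨d0, hd0, hcd0⟩ := hc
        have hg : dotQ g d0 < 0 := by
          by_contra hg
          push_neg at hg
          exact absurd (h d0 (by
            intro gi hgi
            rcases List.mem_cons.mp hgi with rfl | hgi
            · exact hg
            · exact hd0 gi hgi)) (not_le.mpr hcd0)
        set q := dotQ g d0 with hq
        have hqne : q ≠ 0 := ne_of_lt hg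
        -- transformed system
        set c' : n → ℚ := c - (dotQ c d0 / q) • g with hc'
        set L' : List (n → ℚ) := L.map (fun gi => gi - (dotQ gi d0 / q) • g) with hL'
        have key : ∀ (x d : n → ℚ),
            dotQ (x - (dotQ x d0 / q) • g) d = dotQ x (d - (dotQ g d / q) • d0) := by
          intro x d
          rw [dotQ_sub_left, dotQ_smul_left, dotQ_sub_right, dotQ_smul_right]
          ring
        have h' : ∀ d : n → ℚ, (∀ gi ∈ L', 0 ≤ dotQ gi d) → 0 ≤ dotQ c' d := by
          intro d hd
          set d' : n → ℚ := d - (dotQ g d / q) • d0 with hd'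
          have hgd' : dotQ g d' = 0 := by
            rw [hd', dotQ_sub_right, dotQ_smul_right]
            field_simp
            rw [hq]; ring
          have := h d' (by
            intro gi hgi
            rcases List.mem_cons.mp hgi with rfl | hgi
            · exact le_of_eq hgd'.symm
            · rw [← key gi d]
              exact hd _ (List.mem_map.mpr ⟨gi, hgi, rfl⟩))
          rw [← key c d] at this
          exact this
        have hL'len : L'.length = N := by simp [hL', hLen]
        have hc'In : InConeQ L' c' := ih L' hL'len c' h'
        -- shift back
        have hβ : ∀ gi ∈ L, 0 ≤ -(dotQ gi d0 / q) := by
          intro gi hgi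
          have h1 : 0 ≤ dotQ gi d0 := hd0 gi hgi
          have : dotQ gi d0 / q ≤ 0 := div_nonpos_of_nonneg_of_nonpos h1 (le_of_lt hg)
          linarith
        have hc'In' : InConeQ (L.map fun gi => gi + (-(dotQ gi d0 / q)) • g) c' := by
          have : (L.map fun gi => gi + (-(dotQ gi d0 / q)) • g)
              = L.map (fun gi => gi - (dotQ gi d0 / q) • g) := by
            apply List.map_congr_left
            intro gi _
            funext v
            simp [smul_eq_mul]; ring
          rw [this]; exact hc'In
        obtain ⟨s, hs, hsIn⟩ := inConeQ_shift g L _ c' hβ hc'In'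
        refine ⟨s + dotQ c d0 / q, c' - s • g, ?_, hsIn, ?_⟩
        · have : 0 < dotQ c d0 / q := div_pos_iff.mpr (Or.inr ⟨hcd0, hg⟩)
          linarith
        · funext v
          simp only [hc', Pi.add_apply, Pi.sub_apply, Pi.smul_apply, smul_eq_mul]
          ring

theorem farkasQ (L : List (n → ℚ)) (c : n → ℚ)
    (h : ∀ d : n → ℚ, (∀ g ∈ L, 0 ≤ dotQ g d) → 0 ≤ dotQ c d) : InConeQ L c :=
  farkas_len L.length L rfl c h

lemma inConeQ_induction {P : (n → ℚ) → Prop} (h0 : P 0)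
    (hadd : ∀ x y, P x → P y → P (x + y))
    (hsmul : ∀ (t : ℚ) x, 0 ≤ t → P x → P (t • x)) :
    ∀ (L : List (n → ℚ)) (c : n → ℚ), (∀ g ∈ L, P g) → InConeQ L c → P c := by
  intro L
  induction L with
  | nil => intro c _ hc; rwa [show c = 0 from hc]
  | cons g L ih =>
    intro c hg hc
    obtain ⟨t, c', ht, hc', rfl⟩ := hc
    exact hadd _ _ (ih c' (fun gi hgi => hg gi (List.mem_cons_of_mem _ hgi)) hc')
      (hsmul t g ht (hg g (List.mem_cons_self)))

end Farkas

section Helpers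
variable {V : Type} [Fintype V] [DecidableEq V]

lemma list_sum_map_add (s : List V) (f g : V → ℚ) :
    (s.map fun v => f v + g v).sum = (s.map f).sum + (s.map g).sum := by
  induction s with
  | nil => simp
  | cons a s ih => simp [ih]; ring

lemma list_sum_map_mul (s : List V) (t : ℚ) (f : V → ℚ) :
    (s.map fun v => t * f v).sum = t * (s.map f).sum := by
  induction s with
  | nil => simp
  | cons a s ih => simp [ih]; ring

lemma nodup_sum_eq (s : List V) (hs : s.Nodup) (d : V → ℚ) :
    (s.map d).sum = ∑ v : V, if v ∈ s then d v else 0 := by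
  induction s with
  | nil => simp
  | cons a s ih =>
    have ha : a ∉ s := (List.nodup_cons.mp hs).1
    have hnd : s.Nodup := (List.nodup_cons.mp hs).2
    have : ∀ v : V, (if v ∈ a :: s then d v else 0)
        = (if v = a then d v else 0) + (if v ∈ s then d v else 0) := by
      intro v
      by_cases h1 : v = a
      · subst h1; simp [ha]
      · by_cases h2 : v ∈ s <;> simp [h1, h2]
    simp only [this, Finset.sum_add_distrib, ← ih hnd]
    simp [Finset.sum_ite_eq' Finset.univ a d]

end Helpers


section MFHelpers
variable {V : Type} [Fintype V] [DecidableEq V] {G : SimpleGraph V} {T : Set V}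

lemma mf_sum_add (k : TPath G T → ℚ) (F₁ F₂ : TPath G T →₀ ℚ) :
    (F₁ + F₂).sum (fun P w => w * k P)
      = F₁.sum (fun P w => w * k P) + F₂.sum (fun P w => w * k P) :=
  Finsupp.sum_add_index' (by simp) (by intros; ring)

lemma mf_sum_smul (k : TPath G T → ℚ) (t : ℚ) (F : TPath G T →₀ ℚ) :
    (t • F).sum (fun P w => w * k P) = t * F.sum (fun P w => w * k P) := by
  rw [Finsupp.sum_smul_index' (by simp)]
  unfold Finsupp.sum
  rw [Finset.mul_sum]
  exact Finset.sum_congr rfl fun P _ => by simp [smul_eq_mul]; ring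

lemma mf_sum_single (k : TPath G T → ℚ) (P0 : TPath G T) :
    (Finsupp.single P0 (1 : ℚ)).sum (fun P w => w * k P) = k P0 := by
  rw [Finsupp.sum_single_index (by simp)]; ring

lemma mfVal_eq (F : TPath G T →₀ ℚ) : mfVal F = F.sum fun P w => w * (1 : ℚ) :=
  Finsupp.sum_congr (by simp)

open Classical in
lemma mfLoad_eq (v : V) (F : TPath G T →₀ ℚ) :
    mfLoad F v = F.sum fun P w => w * (if v ∈ P.walk.support then (1:ℚ) else 0) :=
  Finsupp.sum_congr fun P _ => by by_cases h : v ∈ P.walk.support <;> simp [h]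

lemma obj_eq (lamQ : ℚ) (aQ : V → ℚ) (F : TPath G T →₀ ℚ) :
    lamQ * mfVal F - mfCost aQ F
      = F.sum fun P w => w * (lamQ - (P.walk.support.map aQ).sum) := by
  unfold mfVal mfCost Finsupp.sum
  rw [Finset.mul_sum, ← Finset.sum_sub_distrib]
  exact Finset.sum_congr rfl fun P _ => by ring

open Classical in
lemma sum_l_load (l : V → ℚ) (F : TPath G T →₀ ℚ) :
    ∑ v : V, l v * mfLoad F v = F.sum fun P w => w * (P.walk.support.map l).sum := by
  unfold Finsupp.sum
  calc ∑ v : V, l v * mfLoad F v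
      = ∑ v : V, ∑ P ∈ F.support, (if v ∈ P.walk.support then l v * F P else 0) := by
        refine Finset.sum_congr rfl fun v _ => ?_
        unfold mfLoad Finsupp.sum
        rw [Finset.mul_sum]
        exact Finset.sum_congr rfl fun P _ => by by_cases h : v ∈ P.walk.support <;> simp [h]
    _ = ∑ P ∈ F.support, ∑ v : V, (if v ∈ P.walk.support then l v * F P else 0) :=
        Finset.sum_comm
    _ = ∑ P ∈ F.support, F P * (∑ v : V, if v ∈ P.walk.support then l v else 0) := by
        refine Finset.sum_congr rfl fun P _ => ?_
        rw [Finset.mul_sum]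
        exact Finset.sum_congr rfl fun v _ => by by_cases h : v ∈ P.walk.support <;> simp [h, mul_comm]
    _ = ∑ P ∈ F.support, F P * (P.walk.support.map l).sum := by
        refine Finset.sum_congr rfl fun P _ => ?_
        rw [nodup_sum_eq _ P.prop.2.2.2.1.support_nodup]

lemma tpath_finite : Finite (TPath G T) := by
  classical
  letI : DecidableRel G.Adj := Classical.decRel _
  let N := Fintype.card V
  let emb : TPath G T → Σ (s : V) (t : V), {p : G.Walk s t // p.length < N} :=
    fun P => ⟨P.s, P.t, ⟨P.walk, P.prop.2.2.2.1.length_lt⟩⟩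
  have hinj : Function.Injective emb := by
    rintro ⟨s, t, w, pr⟩ ⟨s', t', w', pr'⟩ h
    simp only [emb, Sigma.mk.inj_iff] at h
    obtain ⟨rfl, h⟩ := h
    rw [heq_eq_eq, Sigma.mk.inj_iff] at h
    obtain ⟨rfl, h⟩ := h
    rw [heq_eq_eq, Subtype.mk.injEq] at h
    subst h
    rfl
  exact Finite.of_injective emb hinj

end MFHelpers

open Classical in
/-- if `l` is an optimal dual solution and `F` an optimal primal
multiflow for the parametric problem, then for every node `v` with `l(v) > 0`
the capacity-inheriting edge `e_v` of the auxiliary bidirected graph `H`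
(whose capacity is `c(v)` and which is traversed exactly once by the `q`–`q`
path of each geodesic through `v`) is saturated by the bidirected flow
generated by `F`.  Here `ι` is the edge type of `H`, `eAssign v = e_v`,
`χ P` is the incidence vector of the `q`–`q` path corresponding to `P`, and
the generated flow is `f(e) = Σ_P F(P)·χ_P(e)`. -/
theorem locked_edges_saturated_by_generated_flow
    {V : Type} [Fintype V] [DecidableEq V]
    (G : SimpleGraph V) (T : Set V) (c : V → ℕ) (a : V → ℕ) (lam : ℕ)
    (F : TPath G T →₀ ℚ) (hF : MFFeasible c F)
    (hFopt : ∀ F' : TPath G T →₀ ℚ, MFFeasible c F' →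
      (lam : ℚ) * mfVal F' - mfCost (fun v => (a v : ℚ)) F'
        ≤ (lam : ℚ) * mfVal F - mfCost (fun v => (a v : ℚ)) F)
    (l : V → ℚ) (hl : ∀ v, 0 ≤ l v)
    (hlfeas : ∀ P : TPath G T, (P.walk.support.map l).sum
      ≥ (lam : ℚ) - (P.walk.support.map fun v => (a v : ℚ)).sum)
    (hlopt : ∀ l' : V → ℚ, (∀ v, 0 ≤ l' v) →
      (∀ P : TPath G T, (P.walk.support.map l').sum
        ≥ (lam : ℚ) - (P.walk.support.map fun v => (a v : ℚ)).sum) →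
      ∑ v : V, (c v : ℚ) * l v ≤ ∑ v : V, (c v : ℚ) * l' v)
    {ι : Type} (eAssign : V → ι) (cE : ι → ℕ)
    (hcap : ∀ v, cE (eAssign v) = c v)
    (χ : TPath G T → ι → ℚ)
    (hχ : ∀ P : TPath G T, F P ≠ 0 → ∀ v : V,
      χ P (eAssign v) = if v ∈ P.walk.support then 1 else 0)
    (f : ι → ℚ) (hf : f = fun e => F.sum fun P w => w * χ P e) :
    ∀ v : V, 0 < l v → f (eAssign v) = (cE (eAssign v) : ℚ) := by
  classical
  have hfin : Finite (TPath G T) := tpath_finite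
  letI : Fintype (TPath G T) := Fintype.ofFinite _
  set aQ : V → ℚ := fun v => (a v : ℚ) with haQ
  set cQ : V → ℚ := fun v => (c v : ℚ) with hcQ
  set aS : TPath G T → ℚ := fun P => (P.walk.support.map aQ).sum with haS
  set lS : TPath G T → ℚ := fun P => (P.walk.support.map l).sum with hlS
  set Tight : TPath G T → Prop := fun P => lS P = (lam : ℚ) - aS P with hTight
  set chi : TPath G T → V → ℚ :=
    fun P v => if v ∈ P.walk.support then 1 else 0 with hchi
  set unitv : V → V → ℚ := fun u v => if v = u then 1 else 0 with hunitv
  set genList : List (V → ℚ) :=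
    ((Finset.univ.filter fun P : TPath G T => Tight P).toList.map chi)
      ++ ((Finset.univ.filter fun v : V => l v = 0).toList.map unitv) with hgenList
  have hdot_chi : ∀ (P : TPath G T) (d : V → ℚ),
      dotQ (chi P) d = (P.walk.support.map d).sum := by
    intro P d
    rw [nodup_sum_eq _ P.prop.2.2.2.1.support_nodup d]
    unfold dotQ
    refine Finset.sum_congr rfl fun v _ => ?_
    by_cases h : v ∈ P.walk.support <;> simp [chi, h]
  have hdot_unit : ∀ (u : V) (d : V → ℚ), dotQ (unitv u) d = d u := by
    intro u d
    unfold dotQ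
    calc ∑ v : V, unitv u v * d v = ∑ v : V, (if v = u then d v else 0) := by
          refine Finset.sum_congr rfl fun v _ => ?_
          by_cases h : v = u <;> simp [unitv, h]
      _ = d u := by rw [Finset.sum_ite_eq' Finset.univ u d]; simp
  -- Farkas hypothesis, from dual optimality
  have hfark : ∀ d : V → ℚ, (∀ g ∈ genList, 0 ≤ dotQ g d) → 0 ≤ dotQ cQ d := by
    intro d hd
    have hdP : ∀ P : TPath G T, Tight P → 0 ≤ (P.walk.support.map d).sum := by
      intro P hP
      rw [← hdot_chi]
      exact hd _ (List.mem_append_left _ (List.mem_map.mpr ⟨P,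
        Finset.mem_toList.mpr (Finset.mem_filter.mpr ⟨Finset.mem_univ _, hP⟩), rfl⟩))
    have hdZ : ∀ u : V, l u = 0 → 0 ≤ d u := by
      intro u hu
      have := hd _ (List.mem_append_right _ (List.mem_map.mpr ⟨u,
        Finset.mem_toList.mpr (Finset.mem_filter.mpr ⟨Finset.mem_univ _, hu⟩), rfl⟩))
      rwa [hdot_unit] at this
    set dS : TPath G T → ℚ := fun P => (P.walk.support.map d).sum with hdS
    set epsV : V → ℚ := fun u => if d u < 0 then l u / (-(d u)) else 1 with hepsVdef
    set epsP : TPath G T → ℚ :=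
      fun P => if dS P < 0 then (lS P - ((lam:ℚ) - aS P)) / (-(dS P)) else 1 with hepsPdef
    set cands : Finset ℚ :=
      insert 1 ((Finset.univ.image epsV) ∪ (Finset.univ.image epsP)) with hcands
    have hne : cands.Nonempty := ⟨1, Finset.mem_insert_self _ _⟩
    set eps := cands.min' hne with heps
    have hepsV : ∀ u, eps ≤ epsV u := fun u => Finset.min'_le _ _
      (Finset.mem_insert_of_mem (Finset.mem_union_left _
        (Finset.mem_image_of_mem _ (Finset.mem_univ u))))
    have hepsP : ∀ P, eps ≤ epsP P := fun P => Finset.min'_le _ _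
      (Finset.mem_insert_of_mem (Finset.mem_union_right _
        (Finset.mem_image_of_mem _ (Finset.mem_univ P))))
    have hepsVpos : ∀ u, 0 < epsV u := by
      intro u
      by_cases h : d u < 0
      · have hlu : 0 < l u := lt_of_le_of_ne (hl u)
          (fun h0 => absurd (hdZ u h0.symm) (not_le.mpr h))
        simp only [hepsVdef, if_pos h]
        exact div_pos hlu (by linarith)
      · simp [hepsVdef, h]
    have hepsPpos : ∀ P, 0 < epsP P := by
      intro P
      by_cases h : dS P < 0
      · have hnt : ¬ Tight P := fun ht => absurd (hdP P ht) (not_le.mpr h)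
        have hge : (lam:ℚ) - aS P ≤ lS P := hlfeas P
        have hslack : 0 < lS P - ((lam:ℚ) - aS P) := by
          rcases lt_or_eq_of_le hge with h1 | h1
          · linarith
          · exact absurd h1.symm hnt
        simp only [hepsPdef, if_pos h]
        exact div_pos hslack (by linarith)
      · simp [hepsPdef, h]
    have hepspos : 0 < eps := by
      have hmem := cands.min'_mem hne
      rw [← heps] at hmem
      rcases Finset.mem_insert.mp hmem with h1 | h2
      · rw [h1]; norm_num
      · rcases Finset.mem_union.mp h2 with h3 | h3
        · obtain ⟨u, _, hu⟩ := Finset.mem_image.mp h3; rw [← hu]; exact hepsVpos u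
        · obtain ⟨P, _, hP⟩ := Finset.mem_image.mp h3; rw [← hP]; exact hepsPpos P
    set l' : V → ℚ := fun u => l u + eps * d u with hl'def
    have hl'0 : ∀ u, 0 ≤ l' u := by
      intro u
      by_cases h : d u < 0
      · have h1 : epsV u * d u ≤ eps * d u :=
          mul_le_mul_of_nonpos_right (hepsV u) h.le
        have h2 : epsV u * d u = - l u := by
          have hne0 : d u ≠ 0 := ne_of_lt h
          simp only [hepsVdef, if_pos h]
          rw [div_mul_eq_mul_div, div_neg, mul_div_assoc, div_self hne0, mul_one]
        simp only [hl'def]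
        linarith
      · push_neg at h
        exact add_nonneg (hl u) (mul_nonneg hepspos.le h)
    have hl'feas : ∀ P : TPath G T, (P.walk.support.map l').sum
        ≥ (lam : ℚ) - (P.walk.support.map fun v => (a v : ℚ)).sum := by
      intro P
      have hsplit : (P.walk.support.map l').sum = lS P + eps * dS P := by
        simp only [hl'def]
        rw [list_sum_map_add P.walk.support l (fun u => eps * d u),
          list_sum_map_mul P.walk.support eps d]
      have hgoal : (lam : ℚ) - (P.walk.support.map fun v => (a v : ℚ)).sum
          = (lam:ℚ) - aS P := rfl
      rw [hsplit, hgoal]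
      by_cases h : dS P < 0
      · have hnt : ¬ Tight P := fun ht => absurd (hdP P ht) (not_le.mpr h)
        have h1 : epsP P * dS P ≤ eps * dS P :=
          mul_le_mul_of_nonpos_right (hepsP P) h.le
        have hge : (lam:ℚ) - aS P ≤ lS P := hlfeas P
        have h2 : epsP P * dS P = -(lS P - ((lam:ℚ) - aS P)) := by
          have hne0 : dS P ≠ 0 := ne_of_lt h
          simp only [hepsPdef, if_pos h]
          rw [div_mul_eq_mul_div, div_neg, mul_div_assoc, div_self hne0, mul_one]
        linarith
      · push_neg at h
        have hge : (lam:ℚ) - aS P ≤ lS P := hlfeas P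
        nlinarith [hepspos.le]
    have hle := hlopt l' hl'0 hl'feas
    have hexp : ∑ u : V, (c u : ℚ) * l' u
        = ∑ u : V, (c u : ℚ) * l u + eps * dotQ cQ d := by
      simp only [hl'def, hcQ, dotQ, mul_add, Finset.sum_add_distrib, Finset.mul_sum]
      congr 1
      exact Finset.sum_congr rfl fun u _ => by ring
    rw [hexp] at hle
    by_contra hneg
    push_neg at hneg
    have : eps * dotQ cQ d < 0 := mul_neg_of_pos_of_neg hepspos hneg
    linarith
  have hcone : InConeQ genList cQ := farkasQ genList cQ hfark
  -- extract a primal solution attaining the dual value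
  have hS : ∃ F'' : TPath G T →₀ ℚ, (∀ P, 0 ≤ F'' P) ∧ (∀ v, mfLoad F'' v ≤ cQ v) ∧
      (∑ v : V, l v * cQ v = ∑ v : V, l v * mfLoad F'' v) ∧
      ((lam:ℚ) * mfVal F'' - mfCost aQ F'' = ∑ v : V, l v * mfLoad F'' v) := by
    have hload_add : ∀ (F₁ F₂ : TPath G T →₀ ℚ) (v0 : V),
        mfLoad (F₁ + F₂) v0 = mfLoad F₁ v0 + mfLoad F₂ v0 := by
      intro F₁ F₂ v0
      rw [mfLoad_eq, mfLoad_eq, mfLoad_eq, mf_sum_add]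
    have hload_smul : ∀ (t : ℚ) (F₁ : TPath G T →₀ ℚ) (v0 : V),
        mfLoad (t • F₁) v0 = t * mfLoad F₁ v0 := by
      intro t F₁ v0
      rw [mfLoad_eq, mfLoad_eq, mf_sum_smul]
    have hobj_add : ∀ (F₁ F₂ : TPath G T →₀ ℚ),
        (lam:ℚ) * mfVal (F₁ + F₂) - mfCost aQ (F₁ + F₂)
          = ((lam:ℚ) * mfVal F₁ - mfCost aQ F₁) + ((lam:ℚ) * mfVal F₂ - mfCost aQ F₂) := by
      intro F₁ F₂
      rw [obj_eq, obj_eq, obj_eq, mf_sum_add]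
    have hobj_smul : ∀ (t : ℚ) (F₁ : TPath G T →₀ ℚ),
        (lam:ℚ) * mfVal (t • F₁) - mfCost aQ (t • F₁)
          = t * ((lam:ℚ) * mfVal F₁ - mfCost aQ F₁) := by
      intro t F₁
      rw [obj_eq, obj_eq, mf_sum_smul]
    have hload0 : ∀ v0 : V, mfLoad (0 : TPath G T →₀ ℚ) v0 = 0 := by
      intro v0; exact Finsupp.sum_zero_index
    have hobj0 : (lam:ℚ) * mfVal (0 : TPath G T →₀ ℚ) - mfCost aQ (0 : TPath G T →₀ ℚ) = 0 := by
      rw [obj_eq]; exact Finsupp.sum_zero_index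
    refine inConeQ_induction (P := fun x : V → ℚ => ∃ F'' : TPath G T →₀ ℚ,
      (∀ P, 0 ≤ F'' P) ∧ (∀ v, mfLoad F'' v ≤ x v) ∧
      (∑ v : V, l v * x v = ∑ v : V, l v * mfLoad F'' v) ∧
      ((lam:ℚ) * mfVal F'' - mfCost aQ F'' = ∑ v : V, l v * mfLoad F'' v))
      ?_ ?_ ?_ genList cQ ?_ hcone
    · -- zero
      refine ⟨0, fun P => le_rfl, ?_, ?_, ?_⟩
      · intro v0; simp [hload0]
      · simp [hload0]
      · simp [hobj0, hload0]
    · -- additivity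
      rintro x y ⟨F₁, h₁0, h₁le, h₁sum, h₁obj⟩ ⟨F₂, h₂0, h₂le, h₂sum, h₂obj⟩
      refine ⟨F₁ + F₂, ?_, ?_, ?_, ?_⟩
      · intro P
        simp only [Finsupp.add_apply]
        exact add_nonneg (h₁0 P) (h₂0 P)
      · intro v0
        rw [hload_add]
        exact add_le_add (h₁le v0) (h₂le v0)
      · simp only [Pi.add_apply, mul_add, Finset.sum_add_distrib, hload_add, h₁sum, h₂sum]
      · simp only [hobj_add, hload_add, mul_add, Finset.sum_add_distrib, h₁obj, h₂obj]
    · -- scaling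
      rintro t x ht ⟨F₁, h₁0, h₁le, h₁sum, h₁obj⟩
      refine ⟨t • F₁, ?_, ?_, ?_, ?_⟩
      · intro P
        simp only [Finsupp.smul_apply, smul_eq_mul]
        exact mul_nonneg ht (h₁0 P)
      · intro v0
        rw [hload_smul]
        simpa using mul_le_mul_of_nonneg_left (h₁le v0) ht
      · simp only [Pi.smul_apply, smul_eq_mul, hload_smul]
        calc ∑ v0 : V, l v0 * (t * x v0) = t * ∑ v0 : V, l v0 * x v0 := by
              rw [Finset.mul_sum]; exact Finset.sum_congr rfl fun v0 _ => by ring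
          _ = t * ∑ v0 : V, l v0 * mfLoad F₁ v0 := by rw [h₁sum]
          _ = ∑ v0 : V, l v0 * (t * mfLoad F₁ v0) := by
              rw [Finset.mul_sum]; exact Finset.sum_congr rfl fun v0 _ => by ring
      · rw [hobj_smul, h₁obj, Finset.mul_sum]
        simp only [hload_smul]
        exact Finset.sum_congr rfl fun v0 _ => by ring
    · -- generators
      intro g hg
      rcases List.mem_append.mp hg with h | h
      · obtain ⟨P0, hP0, rfl⟩ := List.mem_map.mp h
        have hP0t : Tight P0 :=
          (Finset.mem_filter.mp (Finset.mem_toList.mp hP0)).2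
        have hloadsingle : ∀ v0 : V,
            mfLoad (Finsupp.single P0 (1:ℚ)) v0 = chi P0 v0 := by
          intro v0
          rw [mfLoad_eq, mf_sum_single]
        refine ⟨Finsupp.single P0 (1:ℚ), ?_, ?_, ?_, ?_⟩
        · intro P
          rw [Finsupp.single_apply]
          split_ifs <;> norm_num
        · intro v0
          exact le_of_eq (hloadsingle v0)
        · exact Finset.sum_congr rfl fun v0 _ => by rw [hloadsingle]
        · rw [obj_eq, mf_sum_single, sum_l_load, mf_sum_single]
          have h1 := hP0t
          simp only [hTight, hlS, haS] at h1
          rw [h1]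
      · obtain ⟨u, hu, rfl⟩ := List.mem_map.mp h
        have hul : l u = 0 := (Finset.mem_filter.mp (Finset.mem_toList.mp hu)).2
        have hstep1 : ∑ v0 : V, l v0 * unitv u v0 = ∑ v0 : V, (if v0 = u then l v0 else 0) := by
          refine Finset.sum_congr rfl fun v0 _ => ?_
          by_cases h0 : v0 = u <;> simp [hunitv, h0]
        have hstep2 : ∑ v0 : V, (if v0 = u then l v0 else 0) = l u := by
          rw [Finset.sum_ite_eq' Finset.univ u l]; simp
        refine ⟨0, fun P => le_rfl, ?_, ?_, ?_⟩
        · intro v0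
          rw [hload0]
          by_cases h0 : v0 = u <;> simp [hunitv, h0]
        · rw [hstep1, hstep2, hul]
          simp [hload0]
        · simp [hobj0, hload0]
  obtain ⟨F'', hF''0, hF''le, hsum'', hobj''⟩ := hS
  -- primal optimality gives: dual value ≤ primal optimum
  have hdual_le : ∑ v : V, l v * cQ v ≤ (lam:ℚ) * mfVal F - mfCost aQ F := by
    have hfeas'' : MFFeasible c F'' := ⟨hF''0, fun v0 => by
      have := hF''le v0; simpa [hcQ] using this⟩
    have := hFopt F'' hfeas''
    rw [hobj''] at this
    linarith [hsum'']
  -- weak duality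
  have hweak1 : (lam:ℚ) * mfVal F - mfCost aQ F ≤ ∑ v : V, l v * mfLoad F v := by
    rw [obj_eq, sum_l_load]
    unfold Finsupp.sum
    refine Finset.sum_le_sum fun P _ => ?_
    exact mul_le_mul_of_nonneg_left (by linarith [hlfeas P]) (hF.1 P)
  have hweak2 : ∑ v : V, l v * mfLoad F v ≤ ∑ v : V, l v * cQ v := by
    refine Finset.sum_le_sum fun v0 _ => ?_
    exact mul_le_mul_of_nonneg_left (by simpa [hcQ] using hF.2 v0) (hl v0)
  have heq : ∑ v : V, l v * mfLoad F v = ∑ v : V, l v * cQ v :=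
    le_antisymm hweak2 (by linarith)
  have hterm : ∀ v0 : V, l v0 * (cQ v0 - mfLoad F v0) = 0 := by
    have hz : ∑ v0 : V, l v0 * (cQ v0 - mfLoad F v0) = 0 := by
      simp only [mul_sub, Finset.sum_sub_distrib, heq]
      ring
    intro v0
    exact (Finset.sum_eq_zero_iff_of_nonneg fun v1 _ =>
      mul_nonneg (hl v1) (by
        have := hF.2 v1
        simp only [hcQ]
        linarith)).mp hz v0 (Finset.mem_univ v0)
  intro v hv
  have hload : mfLoad F v = cQ v := by
    rcases mul_eq_zero.mp (hterm v) with h0 | h0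
    · exact absurd h0 (ne_of_gt hv)
    · linarith
  have hfv : (F.sum fun P w => w * χ P (eAssign v)) = mfLoad F v := by
    rw [mfLoad_eq]
    refine Finsupp.sum_congr fun P hP => ?_
    rw [hχ P (Finsupp.mem_support_iff.mp hP) v]
  simp only [hf]
  rw [hfv, hload, hcQ]
  simp [hcap v]
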